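/- For an M-periodic forward committor of a periodically driven Markov chain, the closed one-period equation holds for i ∈ C: q⁺_{m,i} = Σ_{i_1,…,i_M ∈ C} P_{m,i i_1} P_{m+1, i_1 i_2} ⋯ P_{m+M−1, i_{M−1} i_M} q⁺_{m, i_M} + Σ_{τ=1}^{M} Σ_{i_1,…,i_{τ−1} ∈ C, i_τ ∈ B} P_{m, i i_1} ⋯ P_{m+τ−1, i_{τ−1} i_τ}. -/

import Mathlib

/-- **Closed one-period equation for the M-periodic forward committor.**
If the `M`-periodic forward committor `q` satisfies `q_{m,i} = ∑_j P_{m,ij} q_{m+1,j}`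
on `C = (A∪B)ᶜ`, with `q = 0` on `A` and `q = 1` on `B` (periodic boundary conditions
being automatic over `ZMod M`), then for `i ∈ C`:
`q_{m,i} = ∑_{i_1,…,i_M ∈ C} P_{m,i i_1} ⋯ P_{m+M−1, i_{M−1} i_M} q_{m, i_M}
 + ∑_{τ=1}^{M} ∑_{i_1,…,i_{τ−1} ∈ C, i_τ ∈ B} P_{m, i i_1} ⋯ P_{m+τ−1, i_{τ−1} i_τ}`.
Paths are encoded as `r : Fin (L+1) → S` with `r 0 = i`. -/
theorem stmt12
    {S : Type*} [Fintype S] [DecidableEq S] (M : ℕ) [NeZero M]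
    (P : ZMod M → S → S → ℝ)
    (hnonneg : ∀ m i j, 0 ≤ P m i j)
    (hrow : ∀ m i, ∑ j : S, P m i j = 1)
    (A B : Finset S) (hA : A.Nonempty) (hB : B.Nonempty) (hAB : Disjoint A B)
    (q : ZMod M → S → ℝ)
    (hqC : ∀ m : ZMod M, ∀ i ∈ ((A ∪ B)ᶜ : Finset S),
      q m i = ∑ j : S, P m i j * q (m + 1) j)
    (hqA : ∀ m : ZMod M, ∀ i ∈ A, q m i = 0)
    (hqB : ∀ m : ZMod M, ∀ i ∈ B, q m i = 1) :
    ∀ m : ZMod M, ∀ i ∈ ((A ∪ B)ᶜ : Finset S),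
      q m i =
        (∑ r : Fin (M + 1) → S,
          if r 0 = i ∧ (∀ k : Fin (M + 1), 0 < (k : ℕ) → r k ∈ ((A ∪ B)ᶜ : Finset S))
          then (∏ k : Fin M, P (m + ((k : ℕ) : ZMod M)) (r k.castSucc) (r k.succ)) *
            q m (r (Fin.last M))
          else 0) +
        ∑ τ ∈ Finset.Icc 1 M,
          ∑ r : Fin (τ + 1) → S,
            if r 0 = i ∧
                (∀ k : Fin (τ + 1), 0 < (k : ℕ) → (k : ℕ) < τ →
                  r k ∈ ((A ∪ B)ᶜ : Finset S)) ∧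
                r (Fin.last τ) ∈ B
            then ∏ k : Fin τ, P (m + ((k : ℕ) : ZMod M)) (r k.castSucc) (r k.succ)
            else 0 := by
  classical
  intro m i0 hi0
  have key : ∀ L : ℕ, ∀ i ∈ ((A ∪ B)ᶜ : Finset S),
      q m i =
        (∑ r : Fin (L + 1) → S,
          if r 0 = i ∧ (∀ k : Fin (L + 1), 0 < (k : ℕ) → r k ∈ ((A ∪ B)ᶜ : Finset S))
          then (∏ k : Fin L, P (m + ((k : ℕ) : ZMod M)) (r k.castSucc) (r k.succ)) *
            q (m + ((L : ℕ) : ZMod M)) (r (Fin.last L))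
          else 0) +
        ∑ τ ∈ Finset.Icc 1 L,
          ∑ r : Fin (τ + 1) → S,
            if r 0 = i ∧
                (∀ k : Fin (τ + 1), 0 < (k : ℕ) → (k : ℕ) < τ →
                  r k ∈ ((A ∪ B)ᶜ : Finset S)) ∧
                r (Fin.last τ) ∈ B
            then ∏ k : Fin τ, P (m + ((k : ℕ) : ZMod M)) (r k.castSucc) (r k.succ)
            else 0 := by
    intro L
    induction L with
    | zero =>
      intro i hi
      rw [show Finset.Icc 1 0 = ∅ from rfl, Finset.sum_empty, add_zero]
      rw [Fintype.sum_equiv (Equiv.funUnique (Fin 1) S)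
        _ (fun j => if j = i then q m j else 0) (fun r => by
          simp [Fin.forall_fin_one, Fin.last])]
      simp
    | succ L ih =>
      intro i hi
      rw [Finset.sum_Icc_succ_top (by omega : 1 ≤ L + 1)]
      rw [ih i hi]
      have hlastC : ∀ r : Fin (L + 1) → S,
          r 0 = i → (∀ k : Fin (L + 1), 0 < (k : ℕ) → r k ∈ ((A ∪ B)ᶜ : Finset S)) →
          r (Fin.last L) ∈ ((A ∪ B)ᶜ : Finset S) := by
        intro r h0 hk
        rcases Nat.eq_zero_or_pos L with hL | hL
        · subst hL
          rw [show Fin.last 0 = (0 : Fin 1) from rfl, h0]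
          exact hi
        · exact hk _ (by simpa using hL)
      have hstep :
          (∑ r : Fin (L + 1) → S,
            if r 0 = i ∧ (∀ k : Fin (L + 1), 0 < (k : ℕ) → r k ∈ ((A ∪ B)ᶜ : Finset S))
            then (∏ k : Fin L, P (m + ((k : ℕ) : ZMod M)) (r k.castSucc) (r k.succ)) *
              q (m + ((L : ℕ) : ZMod M)) (r (Fin.last L))
            else 0)
          = (∑ r : Fin (L + 1 + 1) → S,
              if r 0 = i ∧ (∀ k : Fin (L + 1 + 1), 0 < (k : ℕ) → r k ∈ ((A ∪ B)ᶜ : Finset S))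
              then (∏ k : Fin (L + 1), P (m + ((k : ℕ) : ZMod M)) (r k.castSucc) (r k.succ)) *
                q (m + (((L + 1 : ℕ)) : ZMod M)) (r (Fin.last (L + 1)))
              else 0)
            + (∑ r : Fin (L + 1 + 1) → S,
              if r 0 = i ∧
                  (∀ k : Fin (L + 1 + 1), 0 < (k : ℕ) → (k : ℕ) < L + 1 →
                    r k ∈ ((A ∪ B)ᶜ : Finset S)) ∧
                  r (Fin.last (L + 1)) ∈ B
              then ∏ k : Fin (L + 1), P (m + ((k : ℕ) : ZMod M)) (r k.castSucc) (r k.succ)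
              else 0) := by
        -- expand the left-hand side using the committor equation at the last state
        have expand :
            (∑ r : Fin (L + 1) → S,
              if r 0 = i ∧ (∀ k : Fin (L + 1), 0 < (k : ℕ) → r k ∈ ((A ∪ B)ᶜ : Finset S))
              then (∏ k : Fin L, P (m + ((k : ℕ) : ZMod M)) (r k.castSucc) (r k.succ)) *
                q (m + ((L : ℕ) : ZMod M)) (r (Fin.last L))
              else 0)
            = ∑ r : Fin (L + 1) → S, ∑ j : S,
                (if r 0 = i ∧ (∀ k : Fin (L + 1), 0 < (k : ℕ) → r k ∈ ((A ∪ B)ᶜ : Finset S))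
                 then (∏ k : Fin L, P (m + ((k : ℕ) : ZMod M)) (r k.castSucc) (r k.succ)) *
                   (P (m + ((L : ℕ) : ZMod M)) (r (Fin.last L)) j *
                     q (m + ((L : ℕ) : ZMod M) + 1) j)
                 else 0) := by
          refine Finset.sum_congr rfl fun r _ => ?_
          split_ifs with h
          · rw [hqC _ _ (hlastC r h.1 h.2), Finset.mul_sum]
          · simp
        rw [expand]
        -- reindex the two right-hand sums via `Fin.snoc`
        rw [← Equiv.sum_comp (Fin.snocEquiv (fun _ : Fin (L + 1 + 1) => S))
            (fun r : Fin (L + 1 + 1) → S =>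
              if r 0 = i ∧ (∀ k : Fin (L + 1 + 1), 0 < (k : ℕ) → r k ∈ ((A ∪ B)ᶜ : Finset S))
              then (∏ k : Fin (L + 1), P (m + ((k : ℕ) : ZMod M)) (r k.castSucc) (r k.succ)) *
                q (m + (((L + 1 : ℕ)) : ZMod M)) (r (Fin.last (L + 1)))
              else 0),
          ← Equiv.sum_comp (Fin.snocEquiv (fun _ : Fin (L + 1 + 1) => S))
            (fun r : Fin (L + 1 + 1) → S =>
              if r 0 = i ∧
                  (∀ k : Fin (L + 1 + 1), 0 < (k : ℕ) → (k : ℕ) < L + 1 →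
                    r k ∈ ((A ∪ B)ᶜ : Finset S)) ∧
                  r (Fin.last (L + 1)) ∈ B
              then ∏ k : Fin (L + 1), P (m + ((k : ℕ) : ZMod M)) (r k.castSucc) (r k.succ)
              else 0)]
        rw [Fintype.sum_prod_type, Fintype.sum_prod_type, ← Finset.sum_add_distrib]
        refine Eq.trans Finset.sum_comm ?_
        refine Finset.sum_congr rfl fun j _ => ?_
        rw [← Finset.sum_add_distrib]
        refine Finset.sum_congr rfl fun r _ => ?_
        -- now a pointwise identity about `Fin.snoc r j`
        have h0 : (Fin.snoc r j : Fin (L + 1 + 1) → S) 0 = r 0 := by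
          rw [show (0 : Fin (L + 1 + 1)) = Fin.castSucc 0 from rfl, Fin.snoc_castSucc]
        have hprod :
            (∏ k : Fin (L + 1), P (m + ((k : ℕ) : ZMod M))
                ((Fin.snoc r j : Fin (L + 1 + 1) → S) k.castSucc)
                ((Fin.snoc r j : Fin (L + 1 + 1) → S) k.succ))
            = (∏ k : Fin L, P (m + ((k : ℕ) : ZMod M)) (r k.castSucc) (r k.succ)) *
                P (m + ((L : ℕ) : ZMod M)) (r (Fin.last L)) j := by
          rw [Fin.prod_univ_castSucc]
          congr 1
          · refine Finset.prod_congr rfl fun k _ => ?_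
            rw [Fin.succ_castSucc, Fin.snoc_castSucc, Fin.snoc_castSucc, Fin.coe_castSucc]
          · rw [Fin.succ_last, Fin.snoc_castSucc, Fin.snoc_last, Fin.val_last]
        have hfC : (∀ k : Fin (L + 1 + 1), 0 < (k : ℕ) →
              (Fin.snoc r j : Fin (L + 1 + 1) → S) k ∈ ((A ∪ B)ᶜ : Finset S))
            ↔ ((∀ k : Fin (L + 1), 0 < (k : ℕ) → r k ∈ ((A ∪ B)ᶜ : Finset S)) ∧
              j ∈ ((A ∪ B)ᶜ : Finset S)) := by
          rw [Fin.forall_fin_succ']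
          simp [Fin.snoc_last]
        have hfB : (∀ k : Fin (L + 1 + 1), 0 < (k : ℕ) → (k : ℕ) < L + 1 →
              (Fin.snoc r j : Fin (L + 1 + 1) → S) k ∈ ((A ∪ B)ᶜ : Finset S))
            ↔ (∀ k : Fin (L + 1), 0 < (k : ℕ) → r k ∈ ((A ∪ B)ᶜ : Finset S)) := by
          rw [Fin.forall_fin_succ']
          simp [Fin.snoc_last, Fin.is_lt, Fin.is_le]
        have hlastsnoc : (Fin.snoc r j : Fin (L + 1 + 1) → S) (Fin.last (L + 1)) = j :=
          Fin.snoc_last _ _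
        simp only [Equiv.coe_fn_mk, Fin.snocEquiv_apply, h0, hprod, hfC, hfB, hlastsnoc]
        rw [show m + (((L + 1 : ℕ)) : ZMod M) = m + ((L : ℕ) : ZMod M) + 1 by
          push_cast; ring]
        by_cases hc : r 0 = i ∧ ∀ k : Fin (L + 1), 0 < (k : ℕ) → r k ∈ ((A ∪ B)ᶜ : Finset S)
        · by_cases hjC : j ∈ ((A ∪ B)ᶜ : Finset S)
          · have hjB : j ∉ B := by
              rw [Finset.mem_compl] at hjC
              exact fun h => hjC (Finset.mem_union_right _ h)
            rw [if_pos hc, if_pos ⟨hc.1, hc.2, hjC⟩, if_neg (fun h => hjB h.2.2)]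
            ring
          · have hmem : j ∈ A ∪ B := by rw [Finset.mem_compl, not_not] at hjC; exact hjC
            rcases Finset.mem_union.mp hmem with hjA | hjB
            · have hq0 : q (m + ((L : ℕ) : ZMod M) + 1) j = 0 := hqA _ _ hjA
              have hjB : j ∉ B := fun h => Finset.disjoint_left.mp hAB hjA h
              rw [if_pos hc, if_neg (fun h => hjC h.2.2), if_neg (fun h => hjB h.2.2), hq0]
              ring
            · have hq1 : q (m + ((L : ℕ) : ZMod M) + 1) j = 1 := hqB _ _ hjB
              rw [if_pos hc, if_neg (fun h => hjC h.2.2), if_pos ⟨hc.1, hc.2, hjB⟩, hq1]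
              ring
        · rw [if_neg hc, if_neg (fun h => hc ⟨h.1, h.2.1⟩), if_neg (fun h => hc ⟨h.1, h.2.1⟩)]
          ring
      rw [hstep]
      ring
  have := key M i0 hi0
  simpa [ZMod.natCast_self] using this
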